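/- arXiv:2409.04870 — 2 statements merged into one kernel-verified Lean document; each statement's English description precedes it below -/
import Mathlib

section
/- Let k > 0, z ∈ ℝ², and let s, t be nonnegative integers. For every x ∈ ℝ² with x ≠ z, writing x − z = r(cos θ, sin θ) with r = |x − z| > 0, the iterated partial derivative of the function F_z(x) = ∫₀^{2π} exp(i k (x − z)·d(φ)) dφ is a finite sum of Bessel functions: ∂_{x₁}^{s} ∂_{x₂}^{t} F_z(x) = Σ_{n = −(s+t)}^{s+t} c_n J_n(k r) e^{i n θ}, where c_n = (i k)^{s+t} iⁿ ω_n and ω_n = (1/(iᵗ 2^{s+t})) ∫₀^{2π} (e^{iφ} + e^{−iφ})^{s} (e^{iφ} − e^{−iφ})^{t} e^{−i n φ} dφ. -/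
set_option maxHeartbeats 1000000
set_option synthInstance.maxHeartbeats 400000

open Complex Real MeasureTheory
open scoped RealInnerProductSpace InnerProductSpace

/-- The Bessel function of the first kind of integer order `n`, via the
integral representation `J_n(t) = (1/(2π)) ∫_{−π}^{π} exp(i(t sin φ − n φ)) dφ`. -/
noncomputable def besselJ (n : ℤ) (t : ℝ) : ℂ :=
  (1 / (2 * Real.pi)) *
    ∫ φ in (-Real.pi)..Real.pi,
      Complex.exp (Complex.I * ((t : ℂ) * (Real.sin φ : ℂ) - (n : ℂ) * (φ : ℂ)))

/-- The unit direction vector `d(φ) = (cos φ, sin φ)` in the Euclidean plane. -/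
noncomputable def dir (φ : ℝ) : EuclideanSpace ℝ (Fin 2) :=
  (WithLp.equiv 2 (Fin 2 → ℝ)).symm ![Real.cos φ, Real.sin φ]

/-- First-order partial derivative in the `i`-th coordinate direction. -/
noncomputable def pd (i : Fin 2) (f : EuclideanSpace ℝ (Fin 2) → ℂ) :
    EuclideanSpace ℝ (Fin 2) → ℂ :=
  fun x => fderiv ℝ f x (EuclideanSpace.single i 1)

/-- The Herglotz wave function with kernel `φ ↦ exp(−i k z·d(φ))`, i.e.
`F_z(x) = ∫₀^{2π} exp(i k (x−z)·d(φ)) dφ`. -/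
noncomputable def Fz (k : ℝ) (z : EuclideanSpace ℝ (Fin 2)) :
    EuclideanSpace ℝ (Fin 2) → ℂ :=
  fun x => ∫ φ in (0:ℝ)..(2 * Real.pi),
    Complex.exp (Complex.I * (k : ℂ) * (⟪x - z, dir φ⟫_ℝ : ℂ))

/-- The coefficient `ω_n = (1/(iᵗ 2^{s+t})) ∫₀^{2π} (e^{iφ}+e^{−iφ})^s (e^{iφ}−e^{−iφ})^t e^{−inφ} dφ`. -/
noncomputable def omegaCoef (s t : ℕ) (n : ℤ) : ℂ :=
  (1 / (Complex.I ^ t * 2 ^ (s + t))) *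
    ∫ φ in (0:ℝ)..(2 * Real.pi),
      (Complex.exp (Complex.I * (φ : ℂ)) + Complex.exp (-(Complex.I * (φ : ℂ)))) ^ s *
        (Complex.exp (Complex.I * (φ : ℂ)) - Complex.exp (-(Complex.I * (φ : ℂ)))) ^ t *
          Complex.exp (-(Complex.I * (n : ℂ) * (φ : ℂ)))

/-! ### Auxiliary lemmas -/

lemma dir_zero (φ : ℝ) : dir φ 0 = Real.cos φ := rfl
lemma dir_one (φ : ℝ) : dir φ 1 = Real.sin φ := rfl

lemma inner_dir (v : EuclideanSpace ℝ (Fin 2)) (φ : ℝ) :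
    ⟪v, dir φ⟫_ℝ = v 0 * Real.cos φ + v 1 * Real.sin φ := by
  simp [PiLp.inner_apply, Fin.sum_univ_two, dir_zero, dir_one, RCLike.inner_apply]
  ring

lemma norm_dir (φ : ℝ) : ‖dir φ‖ = 1 := by
  have h : ‖dir φ‖ = Real.sqrt (Real.cos φ ^2 + Real.sin φ ^2) := by
    simp [EuclideanSpace.norm_eq, Fin.sum_univ_two, dir_zero, dir_one, sq]
  rw [h, Real.cos_sq_add_sin_sq]; simp

lemma dir_eq (φ : ℝ) : dir φ = Real.cos φ • EuclideanSpace.single 0 (1:ℝ)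
    + Real.sin φ • EuclideanSpace.single 1 (1:ℝ) := by
  ext i; fin_cases i <;> simp [dir_zero, dir_one]

lemma continuous_dir : Continuous dir := by
  rw [funext dir_eq]
  continuity

lemma continuous_dir_apply (i : Fin 2) : Continuous fun φ => dir φ i := by
  fin_cases i
  · exact Real.continuous_cos
  · exact Real.continuous_sin

open intervalIntegral in
lemma integral_exp_int (m : ℤ) :
    ∫ φ in (0:ℝ)..(2*Real.pi), Complex.exp (Complex.I * m * φ) =
      if m = 0 then (2*Real.pi : ℂ) else 0 := by
  rcases eq_or_ne m 0 with h | h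
  · simp [h]
  · rw [if_neg h]
    have hc : (Complex.I * m : ℂ) ≠ 0 := by
      simp [Complex.I_ne_zero, Complex.ext_iff]
      exact_mod_cast h
    rw [integral_exp_mul_complex hc]
    have h1 : Complex.exp (Complex.I * m * (2*(Real.pi:ℂ))) = 1 := by
      have h2 : (Complex.I * m * (2*(Real.pi:ℂ)) : ℂ) = m * (2 * Real.pi * Complex.I) := by
        ring
      rw [h2, Complex.exp_int_mul, Complex.exp_two_pi_mul_I, one_zpow]
    simp [h1]

/-- Fourier coefficients of `(e^{iφ}+e^{-iφ})^s (e^{iφ}-e^{-iφ})^t`. -/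
noncomputable def acoef (s t : ℕ) (n : ℤ) : ℂ :=
  ∑ j ∈ Finset.range (s+1), ∑ l ∈ Finset.range (t+1),
    if (2*(j:ℤ) - s + (2*(l:ℤ) - t)) = n then
      (s.choose j : ℂ) * (t.choose l : ℂ) * (-1)^(t-l) else 0

lemma exp_pow_aux (φ : ℝ) (a b : ℕ) :
    Complex.exp (Complex.I*φ)^a * Complex.exp (-(Complex.I*φ))^b
      = Complex.exp (Complex.I*((a:ℤ)-(b:ℤ))*φ) := by
  rw [← Complex.exp_nat_mul, ← Complex.exp_nat_mul, ← Complex.exp_add]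
  congr 1; push_cast; ring

lemma Q_expand (s t : ℕ) (φ : ℝ) :
    (Complex.exp (Complex.I*(φ:ℂ)) + Complex.exp (-(Complex.I*(φ:ℂ))))^s *
      (Complex.exp (Complex.I*(φ:ℂ)) - Complex.exp (-(Complex.I*(φ:ℂ))))^t =
    ∑ n ∈ Finset.Icc (-(s+t:ℤ)) (s+t:ℤ), acoef s t n * Complex.exp (Complex.I*(n:ℂ)*(φ:ℂ)) := by
  have hmem : ∀ j ∈ Finset.range (s+1), ∀ l ∈ Finset.range (t+1),
      (2*(j:ℤ) - s + (2*(l:ℤ) - t)) ∈ Finset.Icc (-(s+t:ℤ)) (s+t:ℤ) := by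
    intro j hj l hl
    rw [Finset.mem_range, Nat.lt_succ_iff] at hj hl
    rw [Finset.mem_Icc]
    constructor <;> [nlinarith [Int.ofNat_nonneg j, Int.ofNat_nonneg l];
      nlinarith [(Int.ofNat_le.2 hj : (j:ℤ) ≤ s), (Int.ofNat_le.2 hl : (l:ℤ) ≤ t)]]
  rw [show (∑ n ∈ Finset.Icc (-(s+t:ℤ)) (s+t:ℤ), acoef s t n * Complex.exp (Complex.I*(n:ℂ)*(φ:ℂ)))
      = ∑ j ∈ Finset.range (s+1), ∑ l ∈ Finset.range (t+1),
          ((s.choose j : ℂ) * (t.choose l : ℂ) * (-1)^(t-l)) *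
            Complex.exp (Complex.I*((2*(j:ℤ) - s + (2*(l:ℤ) - t) : ℤ):ℂ)*(φ:ℂ)) from ?_]
  · rw [sub_eq_add_neg, add_pow, add_pow, Finset.sum_mul_sum]
    refine Finset.sum_congr rfl fun j hj => Finset.sum_congr rfl fun l hl => ?_
    rw [Finset.mem_range, Nat.lt_succ_iff] at hj hl
    rw [neg_pow]
    have h := exp_pow_aux φ (j + l) ((s - j) + (t - l))
    have harr : Complex.exp (Complex.I*(φ:ℂ))^j * Complex.exp (-(Complex.I*(φ:ℂ)))^(s-j) * (s.choose j : ℂ) *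
        (Complex.exp (Complex.I*(φ:ℂ))^l * ((-1)^(t-l) * Complex.exp (-(Complex.I*(φ:ℂ)))^(t-l)) * (t.choose l : ℂ))
        = ((s.choose j : ℂ) * (t.choose l : ℂ) * (-1)^(t-l)) *
          (Complex.exp (Complex.I*(φ:ℂ))^(j+l) * Complex.exp (-(Complex.I*(φ:ℂ)))^((s-j)+(t-l))) := by
      rw [pow_add, pow_add]; ring
    rw [harr, h]
    congr 2
    push_cast [Nat.cast_sub hj, Nat.cast_sub hl]
    ring
  · simp only [acoef, Finset.sum_mul]
    rw [Finset.sum_comm]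
    refine Finset.sum_congr rfl fun j hj => ?_
    rw [Finset.sum_comm]
    refine Finset.sum_congr rfl fun l hl => ?_
    have h := hmem j hj l hl
    rw [show (∑ n ∈ Finset.Icc (-(s+t:ℤ)) (s+t:ℤ),
        (if (2*(j:ℤ) - s + (2*(l:ℤ) - t)) = n then
          (s.choose j : ℂ) * (t.choose l : ℂ) * (-1)^(t-l) else 0) * Complex.exp (Complex.I*(n:ℂ)*(φ:ℂ)))
      = ∑ n ∈ Finset.Icc (-(s+t:ℤ)) (s+t:ℤ),
        (if (2*(j:ℤ) - s + (2*(l:ℤ) - t)) = n then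
          ((s.choose j : ℂ) * (t.choose l : ℂ) * (-1)^(t-l)) * Complex.exp (Complex.I*(n:ℂ)*(φ:ℂ)) else 0) from ?_]
    · rw [Finset.sum_ite_eq, if_pos h]
    · exact Finset.sum_congr rfl fun n _ => by split <;> simp

lemma omega_eq (s t : ℕ) (n : ℤ) (hn : n ∈ Finset.Icc (-(s+t:ℤ)) (s+t:ℤ)) :
    omegaCoef s t n = (2*Real.pi : ℂ) * acoef s t n / (Complex.I^t * 2^(s+t)) := by
  have hint : ∀ φ : ℝ,
      (Complex.exp (Complex.I*(φ:ℂ)) + Complex.exp (-(Complex.I*(φ:ℂ))))^s *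
        (Complex.exp (Complex.I*(φ:ℂ)) - Complex.exp (-(Complex.I*(φ:ℂ))))^t *
          Complex.exp (-(Complex.I * (n:ℂ) * (φ:ℂ)))
      = ∑ m ∈ Finset.Icc (-(s+t:ℤ)) (s+t:ℤ),
          acoef s t m * Complex.exp (Complex.I * ((m - n : ℤ):ℂ) * (φ:ℂ)) := by
    intro φ
    rw [Q_expand, Finset.sum_mul]
    refine Finset.sum_congr rfl fun m _ => ?_
    rw [mul_assoc, ← Complex.exp_add]
    congr 2
    push_cast; ring
  unfold omegaCoef
  rw [intervalIntegral.integral_congr (fun φ _ => hint φ)]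
  rw [intervalIntegral.integral_finset_sum]
  · have h : ∀ m ∈ Finset.Icc (-(s+t:ℤ)) (s+t:ℤ),
        (∫ φ in (0:ℝ)..(2*Real.pi), acoef s t m * Complex.exp (Complex.I * ((m - n : ℤ):ℂ) * (φ:ℂ)))
        = if m = n then acoef s t m * (2*Real.pi:ℂ) else 0 := by
      intro m _
      rw [intervalIntegral.integral_const_mul, integral_exp_int (m - n)]
      simp [sub_eq_zero, mul_ite]
    rw [Finset.sum_congr rfl h, Finset.sum_ite_eq', if_pos hn]
    ring
  · intro m _
    apply Continuous.intervalIntegrable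
    fun_prop

lemma hcos (x : ℂ) : Complex.cos x
    = (Complex.exp (Complex.I*x) + Complex.exp (-(Complex.I*x)))/2 := by
  rw [show Complex.I*x = x*Complex.I by ring, show -(x*Complex.I) = -x*Complex.I by ring]
  rfl

lemma hsin (x : ℂ) : Complex.sin x
    = (Complex.exp (Complex.I*x) - Complex.exp (-(Complex.I*x)))/(2*Complex.I) := by
  have h : Complex.sin x = (Complex.exp (-x*Complex.I) - Complex.exp (x*Complex.I))
      * Complex.I / 2 := rfl
  rw [h, show Complex.I*x = x*Complex.I by ring, show -(x*Complex.I) = -x*Complex.I by ring,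
    eq_div_iff (by simp [Complex.I_ne_zero] : (2*Complex.I) ≠ 0)]
  field_simp
  ring_nf
  rw [Complex.I_sq]
  ring

lemma cs_expand (s t : ℕ) (φ : ℝ) :
    ((Real.cos φ : ℝ):ℂ)^s * ((Real.sin φ : ℝ):ℂ)^t
    = ∑ n ∈ Finset.Icc (-(s+t:ℤ)) (s+t:ℤ),
        (acoef s t n / (Complex.I^t * 2^(s+t))) * Complex.exp (Complex.I*(n:ℂ)*(φ:ℂ)) := by
  rw [Complex.ofReal_cos, Complex.ofReal_sin, hcos, hsin, div_pow, div_pow,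
    div_mul_div_comm, Q_expand, Finset.sum_div]
  exact Finset.sum_congr rfl fun n _ => by ring

lemma exp_int_two_pi (m : ℤ) : Complex.exp (Complex.I * m * (2*(Real.pi:ℂ))) = 1 := by
  have h : (Complex.I * m * (2*(Real.pi:ℂ)) : ℂ) = m * (2 * Real.pi * Complex.I) := by ring
  rw [h, Complex.exp_int_mul, Complex.exp_two_pi_mul_I, one_zpow]

lemma exp_I_n_pi_div_two (n : ℤ) :
    Complex.exp (Complex.I * (n:ℂ) * ((Real.pi/2 : ℝ):ℂ)) = Complex.I ^ n := by
  have h0 : Complex.exp (((Real.pi/2 : ℝ):ℂ) * Complex.I) = Complex.I := by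
    rw [Complex.exp_mul_I, ← Complex.ofReal_cos, ← Complex.ofReal_sin,
      Real.cos_pi_div_two, Real.sin_pi_div_two]
    simp
  rw [show Complex.I * (n:ℂ) * ((Real.pi/2:ℝ):ℂ) = (n:ℂ) * (((Real.pi/2:ℝ):ℂ) * Complex.I) by ring,
    Complex.exp_int_mul, h0]

lemma bessel_int (a θ : ℝ) (n : ℤ) :
    (∫ φ in (0:ℝ)..(2*Real.pi), Complex.exp (Complex.I*(n:ℂ)*(φ:ℂ)) *
      Complex.exp (Complex.I*(a:ℂ)*((Real.cos (φ - θ) : ℝ):ℂ)))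
    = (2*Real.pi:ℂ) * Complex.I^n * Complex.exp (Complex.I*(n:ℂ)*(θ:ℂ)) * besselJ n a := by
  set f : ℝ → ℂ := fun φ => Complex.exp (Complex.I*(n:ℂ)*(φ:ℂ)) *
      Complex.exp (Complex.I*(a:ℂ)*((Real.cos (φ - θ) : ℝ):ℂ)) with hf
  set g : ℝ → ℂ := fun ψ => Complex.exp (Complex.I * ((a:ℂ)*((Real.sin ψ : ℝ):ℂ) - (n:ℂ)*(ψ:ℂ)))
    with hg
  have hper : Function.Periodic f (2*Real.pi) := by
    intro φ
    simp only [hf]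
    have h1 : Complex.exp (Complex.I*(n:ℂ)*((φ + 2*Real.pi : ℝ):ℂ))
        = Complex.exp (Complex.I*(n:ℂ)*(φ:ℂ)) := by
      rw [show (Complex.I*(n:ℂ)*((φ + 2*Real.pi : ℝ):ℂ))
          = Complex.I*(n:ℂ)*(φ:ℂ) + Complex.I*(n:ℂ)*(2*(Real.pi:ℂ)) by push_cast; ring,
        Complex.exp_add, exp_int_two_pi, mul_one]
    have h2 : Real.cos (φ + 2*Real.pi - θ) = Real.cos (φ - θ) := by
      rw [show φ + 2*Real.pi - θ = (φ - θ) + 2*Real.pi by ring, Real.cos_add_two_pi]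
    rw [h1, h2]
  have e1 := hper.intervalIntegral_add_eq 0 (θ + Real.pi/2 - Real.pi)
  rw [zero_add, show θ + Real.pi/2 - Real.pi + 2*Real.pi = Real.pi + (θ + Real.pi/2) by ring] at e1
  have e2 := intervalIntegral.integral_comp_add_right (a := -Real.pi) (b := Real.pi) f
    (θ + Real.pi/2)
  rw [show -Real.pi + (θ + Real.pi/2) = θ + Real.pi/2 - Real.pi by ring] at e2
  have e3 : ∀ ψ : ℝ, f (ψ + (θ + Real.pi/2))
      = (Complex.exp (Complex.I*(n:ℂ)*(θ:ℂ)) * Complex.exp (Complex.I*(n:ℂ)*((Real.pi/2:ℝ):ℂ)))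
        * g (-ψ) := by
    intro ψ
    simp only [hf, hg]
    rw [show ψ + (θ + Real.pi/2) - θ = ψ + Real.pi/2 by ring, Real.cos_add_pi_div_two]
    simp only [← Complex.exp_add]
    congr 1
    push_cast [Real.sin_neg]
    ring
  have e4 : (∫ ψ in (-Real.pi)..Real.pi, g (-ψ)) = ∫ ψ in (-Real.pi)..Real.pi, g ψ := by
    have h := intervalIntegral.integral_comp_neg (a := -Real.pi) (b := Real.pi) g
    simpa using h
  have e5 : (∫ ψ in (-Real.pi)..Real.pi, g ψ) = (2*Real.pi : ℂ) * besselJ n a := by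
    have hpi : (2*(Real.pi:ℂ)) ≠ 0 := by
      simp [Real.pi_ne_zero]
    rw [besselJ, ← mul_assoc, mul_one_div, div_self hpi, one_mul]
  calc (∫ φ in (0:ℝ)..(2*Real.pi), f φ)
      = ∫ φ in (θ + Real.pi/2 - Real.pi)..(Real.pi + (θ + Real.pi/2)), f φ := e1
    _ = ∫ ψ in (-Real.pi)..Real.pi, f (ψ + (θ + Real.pi/2)) := e2.symm
    _ = ∫ ψ in (-Real.pi)..Real.pi,
          (Complex.exp (Complex.I*(n:ℂ)*(θ:ℂ)) * Complex.exp (Complex.I*(n:ℂ)*((Real.pi/2:ℝ):ℂ)))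
            * g (-ψ) := intervalIntegral.integral_congr fun ψ _ => e3 ψ
    _ = (Complex.exp (Complex.I*(n:ℂ)*(θ:ℂ)) * Complex.exp (Complex.I*(n:ℂ)*((Real.pi/2:ℝ):ℂ)))
          * ∫ ψ in (-Real.pi)..Real.pi, g (-ψ) := intervalIntegral.integral_const_mul _ _
    _ = (2*Real.pi:ℂ) * Complex.I^n * Complex.exp (Complex.I*(n:ℂ)*(θ:ℂ)) * besselJ n a := by
        rw [e4, e5, exp_I_n_pi_div_two]
        ring

/-! ### Differentiation under the integral sign -/

noncomputable def Lm (φ : ℝ) : EuclideanSpace ℝ (Fin 2) →L[ℝ] ℂ :=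
  Complex.ofRealCLM.comp (innerSL ℝ (dir φ))

lemma Lm_apply (φ : ℝ) (v : EuclideanSpace ℝ (Fin 2)) :
    Lm φ v = ((⟪v, dir φ⟫_ℝ : ℝ) : ℂ) := by
  simp [Lm, RCLike.inner_apply, PiLp.inner_apply]; ring

lemma norm_Lm_le (φ : ℝ) : ‖Lm φ‖ ≤ 1 := by
  refine ContinuousLinearMap.opNorm_le_bound _ zero_le_one fun v => ?_
  rw [Lm_apply, Complex.norm_real, one_mul]
  calc |⟪v, dir φ⟫_ℝ| ≤ ‖v‖ * ‖dir φ‖ := abs_real_inner_le_norm v (dir φ)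
    _ = ‖v‖ := by rw [norm_dir, mul_one]

lemma continuous_Lm : Continuous Lm :=
  continuous_const.clm_comp ((innerSL ℝ).continuous.comp continuous_dir)

lemma norm_exp_I_mul (k y : ℝ) : ‖Complex.exp (Complex.I * k * (y:ℂ))‖ = 1 := by
  rw [Complex.norm_exp]
  simp [Complex.mul_re]

noncomputable def HH (k : ℝ) (z : EuclideanSpace ℝ (Fin 2)) (c : ℝ → ℂ) :
    EuclideanSpace ℝ (Fin 2) → ℂ :=
  fun x => ∫ φ in (0:ℝ)..(2 * Real.pi),
    c φ * Complex.exp (Complex.I * (k : ℂ) * (⟪x - z, dir φ⟫_ℝ : ℂ))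

lemma hasFDerivAt_HH (k : ℝ) (z : EuclideanSpace ℝ (Fin 2)) (c : ℝ → ℂ)
    (hc : Continuous c) (x₀ : EuclideanSpace ℝ (Fin 2)) :
    HasFDerivAt (HH k z c)
      (∫ φ in (0:ℝ)..(2 * Real.pi),
        (c φ * Complex.exp (Complex.I * (k:ℂ) * (⟪x₀ - z, dir φ⟫_ℝ : ℂ)) * (Complex.I * k)) •
          (Lm φ)) x₀ := by
  have hconts : ∀ x : EuclideanSpace ℝ (Fin 2),
      Continuous fun φ => c φ * Complex.exp (Complex.I * (k:ℂ) * (⟪x - z, dir φ⟫_ℝ : ℂ)) := by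
    intro x
    exact hc.mul (Complex.continuous_exp.comp (continuous_const.mul
      (Complex.continuous_ofReal.comp (continuous_const.inner continuous_dir))))
  have hdiff : ∀ (φ : ℝ) (x : EuclideanSpace ℝ (Fin 2)),
      HasFDerivAt (fun x => c φ * Complex.exp (Complex.I * (k:ℂ) * (⟪x - z, dir φ⟫_ℝ : ℂ)))
        ((c φ * Complex.exp (Complex.I * (k:ℂ) * (⟪x - z, dir φ⟫_ℝ : ℂ)) * (Complex.I * k)) •
          (Lm φ)) x := by
    intro φ x
    have h0 : HasFDerivAt (fun x : EuclideanSpace ℝ (Fin 2) => Lm φ (x - z)) (Lm φ) x := by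
      have h := (Lm φ).hasFDerivAt (x := x - z)
      have h1 : HasFDerivAt (fun x : EuclideanSpace ℝ (Fin 2) => x - z)
          (ContinuousLinearMap.id ℝ _) x := (hasFDerivAt_id x).sub_const z
      exact h.comp x h1
    have hu : HasFDerivAt (fun x : EuclideanSpace ℝ (Fin 2) =>
        Complex.I * (k:ℂ) * (Lm φ (x - z))) ((Complex.I * k) • Lm φ) x := h0.const_mul _
    have hcomp := (Complex.hasDerivAt_exp
      (Complex.I * (k:ℂ) * (Lm φ (x - z)))).comp_hasFDerivAt x hu
    have hmul := hcomp.const_mul (c φ)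
    have heq : (fun x : EuclideanSpace ℝ (Fin 2) =>
        c φ * Complex.exp (Complex.I * (k:ℂ) * (Lm φ (x - z)))) =
        (fun x => c φ * Complex.exp (Complex.I * (k:ℂ) * (⟪x - z, dir φ⟫_ℝ : ℂ))) := by
      funext y; rw [Lm_apply]
    simp only [Function.comp_def] at hmul
    rw [heq] at hmul
    refine hmul.congr_fderiv ?_
    rw [Lm_apply, smul_smul, smul_smul]
  have key := intervalIntegral.hasFDerivAt_integral_of_dominated_of_fderiv_le
    (F := fun x φ => c φ * Complex.exp (Complex.I * (k:ℂ) * (⟪x - z, dir φ⟫_ℝ : ℂ)))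
    (F' := fun x φ => (c φ * Complex.exp (Complex.I * (k:ℂ) * (⟪x - z, dir φ⟫_ℝ : ℂ)) *
      (Complex.I * k)) • (Lm φ))
    (x₀ := x₀) (a := (0:ℝ)) (b := 2*Real.pi) (μ := volume)
    (bound := fun φ => ‖c φ‖ * |k|) (s := Metric.ball x₀ 1) (Metric.ball_mem_nhds x₀ one_pos)
    ?_ ?_ ?_ ?_ ?_ ?_
  · exact key
  · filter_upwards with x using ((hconts x).aestronglyMeasurable).restrict
  · exact ((hconts x₀).intervalIntegrable _ _)
  · refine Continuous.aestronglyMeasurable ?_ |>.restrict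
    exact (((hconts x₀).mul continuous_const).smul continuous_Lm)
  · filter_upwards with φ _ x _
    refine ContinuousLinearMap.opNorm_le_bound _ (by positivity) fun v => ?_
    rw [ContinuousLinearMap.smul_apply, norm_smul]
    have h2 : ‖c φ * Complex.exp (Complex.I * (k:ℂ) * (⟪x - z, dir φ⟫_ℝ : ℂ)) * (Complex.I * (k:ℂ))‖
        = ‖c φ‖ * |k| := by
      rw [norm_mul, norm_mul, norm_exp_I_mul, mul_one, norm_mul]
      simp [Complex.norm_real, Complex.norm_I]
    rw [h2, Lm_apply, Complex.norm_real, Real.norm_eq_abs]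
    have h3 : |⟪v, dir φ⟫_ℝ| ≤ ‖v‖ := by
      calc |⟪v, dir φ⟫_ℝ| ≤ ‖v‖ * ‖dir φ‖ := abs_real_inner_le_norm v (dir φ)
        _ = ‖v‖ := by rw [norm_dir, mul_one]
    calc ‖c φ‖ * |k| * |⟪v, dir φ⟫_ℝ| ≤ ‖c φ‖ * |k| * ‖v‖ := by gcongr
      _ = _ := by ring
  · exact ((hc.norm.mul continuous_const).intervalIntegrable _ _)
  · filter_upwards with φ _ x _ using hdiff φ x

lemma inner_single_dir (i : Fin 2) (φ : ℝ) :
    ⟪EuclideanSpace.single i (1:ℝ), dir φ⟫_ℝ = dir φ i := by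
  rw [EuclideanSpace.inner_single_left]
  simp

lemma pd_HH (k : ℝ) (z : EuclideanSpace ℝ (Fin 2)) (i : Fin 2) (c : ℝ → ℂ)
    (hc : Continuous c) :
    pd i (HH k z c) = HH k z (fun φ => Complex.I * (k:ℂ) * ((dir φ i : ℝ):ℂ) * c φ) := by
  funext x₀
  have h := hasFDerivAt_HH k z c hc x₀
  have hint : IntervalIntegrable
      (fun φ => (c φ * Complex.exp (Complex.I * (k:ℂ) * (⟪x₀ - z, dir φ⟫_ℝ : ℂ)) *
        (Complex.I * k)) • (Lm φ)) volume 0 (2*Real.pi) := by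
    apply Continuous.intervalIntegrable
    exact (((hc.mul (Complex.continuous_exp.comp (continuous_const.mul
      (Complex.continuous_ofReal.comp (continuous_const.inner continuous_dir))))).mul
        continuous_const).smul continuous_Lm)
  show fderiv ℝ (HH k z c) x₀ (EuclideanSpace.single i 1) = _
  rw [h.fderiv, ContinuousLinearMap.intervalIntegral_apply hint (EuclideanSpace.single i 1)]
  unfold HH
  refine intervalIntegral.integral_congr fun φ _ => ?_
  rw [ContinuousLinearMap.smul_apply, Lm_apply, inner_single_dir]
  simp only [smul_eq_mul]
  ring

lemma iter_pd (k : ℝ) (z : EuclideanSpace ℝ (Fin 2)) (i : Fin 2) (m : ℕ) :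
    ∀ (c : ℝ → ℂ), Continuous c →
      (pd i)^[m] (HH k z c)
        = HH k z (fun φ => (Complex.I * (k:ℂ) * ((dir φ i : ℝ):ℂ))^m * c φ) := by
  induction m with
  | zero =>
      intro c hc
      simp only [Function.iterate_zero, id_eq, pow_zero, one_mul]
  | succ m ih =>
      intro c hc
      have hcont : Continuous (fun φ : ℝ => Complex.I * (k:ℂ) * ((dir φ i : ℝ):ℂ) * c φ) :=
        (continuous_const.mul
          (Complex.continuous_ofReal.comp (continuous_dir_apply i))).mul hc
      rw [Function.iterate_succ_apply, pd_HH k z i c hc, ih _ hcont]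
      unfold HH
      funext x
      refine intervalIntegral.integral_congr fun φ _ => ?_
      simp only [pow_succ]
      ring

/-! ### Main theorem -/

/-- For `k > 0`, `z ∈ ℝ²` and nonnegative integers `s, t`: at every `x ≠ z`, writing
`x − z = r (cos θ, sin θ)` with `r = ‖x − z‖ > 0`, the iterated partial derivative of
`F_z` is the finite sum `∂₁^s ∂₂^t F_z(x) = Σ_{n=−(s+t)}^{s+t} c_n J_n(k r) e^{i n θ}`
with `c_n = (i k)^{s+t} iⁿ ω_n`. -/
theorem deriv_herglotz_bessel_sum (k : ℝ) (hk : 0 < k) (z : EuclideanSpace ℝ (Fin 2))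
    (s t : ℕ) (x : EuclideanSpace ℝ (Fin 2)) (hx : x ≠ z) (r θ : ℝ)
    (hr : r = ‖x - z‖) (hxz : x - z = r • dir θ) :
    (pd 0)^[s] ((pd 1)^[t] (Fz k z)) x =
      ∑ n ∈ Finset.Icc (-(s + t : ℤ)) (s + t : ℤ),
        ((Complex.I * (k : ℂ)) ^ (s + t) * Complex.I ^ n * omegaCoef s t n) *
          besselJ n (k * r) * Complex.exp (Complex.I * (n : ℂ) * (θ : ℂ)) := by
  have hFz : Fz k z = HH k z (fun _ => 1) := by
    funext y
    exact intervalIntegral.integral_congr fun φ _ => (one_mul _).symm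
  have hc1 : Continuous (fun _ : ℝ => (1:ℂ)) := continuous_const
  have hstep1 : (pd 1)^[t] (Fz k z)
      = HH k z (fun φ => (Complex.I * (k:ℂ) * ((dir φ 1 : ℝ):ℂ))^t * 1) := by
    rw [hFz, iter_pd k z 1 t _ hc1]
  have hc2 : Continuous (fun φ : ℝ => (Complex.I * (k:ℂ) * ((dir φ 1 : ℝ):ℂ))^t * 1) := by
    exact (((continuous_const.mul
      (Complex.continuous_ofReal.comp (continuous_dir_apply 1))).pow t).mul continuous_const)
  have hstep2 : (pd 0)^[s] ((pd 1)^[t] (Fz k z))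
      = HH k z (fun φ => (Complex.I * (k:ℂ) * ((dir φ 0 : ℝ):ℂ))^s *
          ((Complex.I * (k:ℂ) * ((dir φ 1 : ℝ):ℂ))^t * 1)) := by
    rw [hstep1, iter_pd k z 0 s _ hc2]
  rw [hstep2]
  -- now evaluate the integral
  have hin : ∀ φ : ℝ, ⟪x - z, dir φ⟫_ℝ = r * Real.cos (φ - θ) := by
    intro φ
    rw [hxz, real_inner_smul_left, inner_dir, dir_zero, dir_one, Real.cos_sub]
    ring
  have hintegrand : ∀ φ : ℝ,
      (Complex.I * (k:ℂ) * ((dir φ 0 : ℝ):ℂ))^s *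
          ((Complex.I * (k:ℂ) * ((dir φ 1 : ℝ):ℂ))^t * 1) *
        Complex.exp (Complex.I * (k:ℂ) * ((⟪x - z, dir φ⟫_ℝ : ℝ):ℂ))
      = ∑ n ∈ Finset.Icc (-(s+t:ℤ)) (s+t:ℤ),
          ((Complex.I * (k:ℂ))^(s+t) * (acoef s t n / (Complex.I^t * 2^(s+t)))) *
            (Complex.exp (Complex.I*(n:ℂ)*(φ:ℂ)) *
              Complex.exp (Complex.I*((k*r : ℝ):ℂ)*((Real.cos (φ - θ) : ℝ):ℂ))) := by
    intro φ
    rw [hin φ, dir_zero, dir_one]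
    have hE : Complex.exp (Complex.I * (k:ℂ) * ((r * Real.cos (φ - θ) : ℝ):ℂ))
        = Complex.exp (Complex.I*((k*r : ℝ):ℂ)*((Real.cos (φ - θ) : ℝ):ℂ)) := by
      congr 1; push_cast; ring
    rw [hE, show (Complex.I * (k:ℂ) * ((Real.cos φ : ℝ):ℂ))^s *
          ((Complex.I * (k:ℂ) * ((Real.sin φ : ℝ):ℂ))^t * 1)
        = (Complex.I * (k:ℂ))^(s+t) * (((Real.cos φ : ℝ):ℂ)^s * ((Real.sin φ : ℝ):ℂ)^t) by ring,
      cs_expand, Finset.mul_sum, Finset.sum_mul]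
    exact Finset.sum_congr rfl fun n _ => by ring
  have hHH : HH k z (fun φ => (Complex.I * (k:ℂ) * ((dir φ 0 : ℝ):ℂ))^s *
      ((Complex.I * (k:ℂ) * ((dir φ 1 : ℝ):ℂ))^t * 1)) x
      = ∑ n ∈ Finset.Icc (-(s+t:ℤ)) (s+t:ℤ),
          ((Complex.I * (k:ℂ))^(s+t) * (acoef s t n / (Complex.I^t * 2^(s+t)))) *
            ((2*Real.pi:ℂ) * Complex.I^n * Complex.exp (Complex.I*(n:ℂ)*(θ:ℂ)) *
              besselJ n (k*r)) := by
    unfold HH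
    rw [intervalIntegral.integral_congr (fun φ _ => hintegrand φ)]
    rw [intervalIntegral.integral_finset_sum (fun n _ => by
      apply Continuous.intervalIntegrable
      fun_prop)]
    refine Finset.sum_congr rfl fun n _ => ?_
    rw [intervalIntegral.integral_const_mul, bessel_int (k*r) θ n]
  rw [hHH]
  refine Finset.sum_congr rfl fun n hn => ?_
  rw [omega_eq s t n hn]
  have hd : (Complex.I^t * (2:ℂ)^(s+t)) ≠ 0 := by
    simp [Complex.I_ne_zero]
  field_simp
end

section
/- Let H be a complex Hilbert space and let F : H → H be a bounded linear operator satisfying F − F* = (i/(4π)) F* F. Then the operator norm of F is at most 8π, i.e., ‖F g‖ ≤ 8π ‖g‖ for every g ∈ H. -/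
open Complex Real
open scoped InnerProductSpace

/-- If a bounded operator `F` on a complex Hilbert space satisfies
`F − F* = (i/(4π)) F* F`, then `‖F g‖ ≤ 8π ‖g‖` for every `g`. -/
theorem norm_le_of_farfield_identity {H : Type*} [NormedAddCommGroup H]
    [InnerProductSpace ℂ H] [CompleteSpace H] (F : H →L[ℂ] H)
    (hF : F - ContinuousLinearMap.adjoint F =
      ((Complex.I / (4 * Real.pi)) : ℂ) • ((ContinuousLinearMap.adjoint F).comp F))
    (g : H) :
    ‖F g‖ ≤ 8 * Real.pi * ‖g‖ := by
  have hpi : (0:ℝ) < Real.pi := Real.pi_pos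
  have h := congrArg (fun T : H →L[ℂ] H => (inner ℂ g (T g) : ℂ)) hF
  simp only [ContinuousLinearMap.sub_apply, ContinuousLinearMap.smul_apply,
    ContinuousLinearMap.comp_apply, inner_sub_right, inner_smul_right,
    ContinuousLinearMap.adjoint_inner_right] at h
  rw [inner_self_eq_norm_sq_to_K (𝕜 := ℂ)] at h
  have hconj : (⟪g, F g⟫_ℂ).im = -(⟪F g, g⟫_ℂ).im := by
    rw [← inner_conj_symm g (F g), Complex.conj_im]
  have h2 : ⟪g, F g⟫_ℂ - ⟪F g, g⟫_ℂ = Complex.I * ((‖F g‖^2 / (4*Real.pi) : ℝ) : ℂ) := by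
    rw [h]; push_cast; field_simp; rfl
  have him := congrArg Complex.im h2
  simp only [Complex.sub_im, Complex.mul_im, Complex.I_re, Complex.I_im,
    Complex.ofReal_re, Complex.ofReal_im, zero_mul, one_mul, add_zero, mul_zero,
    zero_add, hconj] at him
  have hkey : ‖F g‖^2 = 8 * Real.pi * (-(⟪F g, g⟫_ℂ).im) := by
    field_simp at him; nlinarith [him]
  have habs : -(⟪F g, g⟫_ℂ).im ≤ ‖F g‖ * ‖g‖ :=
    le_trans (le_trans (neg_le_abs _) (Complex.abs_im_le_norm _))
      (by simpa using norm_inner_le_norm (𝕜 := ℂ) (F g) g)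
  have hsq : ‖F g‖^2 ≤ 8 * Real.pi * (‖F g‖ * ‖g‖) := by
    rw [hkey]
    exact mul_le_mul_of_nonneg_left habs (by positivity)
  rcases eq_or_lt_of_le (norm_nonneg (F g)) with h0 | h0
  · rw [← h0]; positivity
  · nlinarith [hsq, h0]
end
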